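/- Let f(x) = a₄x⁴ + a₃x³ + a₂x² + a₁x + a₀ over a field with a₄ a square, √a₄ a fixed square root. Given (x₁,y₁), (x₂,y₂) on y² = f(x) with x₁ ≠ x₂, define P(x) = √a₄(x−x₁)(x−x₂) + (x−x₂)y₁/(x₁−x₂) + (x−x₁)y₂/(x₂−x₁), b₂, b₁, b₀ its coefficients, and x₃ = −x₁ − x₂ − (2b₀b₂ + b₁² − a₂)/(2b₁b₂ − a₃), y₃ = −P(x₃) (assuming 2b₁b₂ ≠ a₃). Then y₃² = f(x₃), i.e. the Euler addition formula produces a point on the quartic curve. -/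

import Mathlib

/-- Euler's addition formula on the quartic curve `y² = f(x)` produces a point
on the curve. -/
theorem stmt_9 {K : Type*} [Field K] [CharZero K]
    (a₀ a₁ a₂ a₃ a₄ s : K) (hs : s ^ 2 = a₄)
    (x₁ y₁ x₂ y₂ b₂ b₁ b₀ : K)
    (h₁ : y₁ ^ 2 = a₄ * x₁ ^ 4 + a₃ * x₁ ^ 3 + a₂ * x₁ ^ 2 + a₁ * x₁ + a₀)
    (h₂ : y₂ ^ 2 = a₄ * x₂ ^ 4 + a₃ * x₂ ^ 3 + a₂ * x₂ ^ 2 + a₁ * x₂ + a₀)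
    (hne : x₁ ≠ x₂)
    (hP : ∀ x : K,
      s * (x - x₁) * (x - x₂) + (x - x₂) * y₁ / (x₁ - x₂)
        + (x - x₁) * y₂ / (x₂ - x₁) = b₂ * x ^ 2 + b₁ * x + b₀)
    (hden : 2 * b₁ * b₂ ≠ a₃) :
    let x₃ := -x₁ - x₂ - (2 * b₀ * b₂ + b₁ ^ 2 - a₂) / (2 * b₁ * b₂ - a₃)
    let y₃ := -(b₂ * x₃ ^ 2 + b₁ * x₃ + b₀)
    y₃ ^ 2 = a₄ * x₃ ^ 4 + a₃ * x₃ ^ 3 + a₂ * x₃ ^ 2 + a₁ * x₃ + a₀ := by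
  intro x₃ y₃
  have hd : x₁ - x₂ ≠ 0 := sub_ne_zero.mpr hne
  have hd' : x₂ - x₁ ≠ 0 := sub_ne_zero.mpr (Ne.symm hne)
  have hc : 2 * b₁ * b₂ - a₃ ≠ 0 := sub_ne_zero.mpr hden
  -- P(x₁) = y₁, P(x₂) = y₂
  have e1 : y₁ = b₂ * x₁ ^ 2 + b₁ * x₁ + b₀ := by
    have h := hP x₁; field_simp at h; exact mul_left_cancel₀ hd' (by linear_combination h)
  have e2 : y₂ = b₂ * x₂ ^ 2 + b₁ * x₂ + b₀ := by
    have h := hP x₂; field_simp at h; exact mul_left_cancel₀ hd (by linear_combination h)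
  -- b₂ = s
  have hb₂ : b₂ = s := by
    have h0 := hP 0
    have hp := hP 1
    have hm := hP (-1)
    field_simp at h0 hp hm
    have key : (b₂ - s) * (2 * ((x₁ - x₂) * (x₂ - x₁))) = 0 := by
      linear_combination 2 * h0 - hp - hm
    rcases mul_eq_zero.mp key with h | h
    · exact sub_eq_zero.mp h
    · exact absurd h (mul_ne_zero two_ne_zero (mul_ne_zero hd hd'))
  subst hb₂
  subst hs
  have hg1 : (2*b₁*b₂ - a₃)*x₁^3 + (b₁^2 + 2*b₀*b₂ - a₂)*x₁^2
      + (2*b₀*b₁ - a₁)*x₁ + (b₀^2 - a₀) = 0 := by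
    linear_combination h₁ - (y₁ + (b₂*x₁^2 + b₁*x₁ + b₀)) * e1
  have hg2 : (2*b₁*b₂ - a₃)*x₂^3 + (b₁^2 + 2*b₀*b₂ - a₂)*x₂^2
      + (2*b₀*b₁ - a₁)*x₂ + (b₀^2 - a₀) = 0 := by
    linear_combination h₂ - (y₂ + (b₂*x₂^2 + b₁*x₂ + b₀)) * e2
  show (-(b₂ * x₃ ^ 2 + b₁ * x₃ + b₀)) ^ 2
      = b₂^2 * x₃ ^ 4 + a₃ * x₃ ^ 3 + a₂ * x₃ ^ 2 + a₁ * x₃ + a₀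
  have hXt : (2*b₁*b₂ - a₃) * (x₃ + x₁ + x₂) = -(2*b₀*b₂ + b₁^2 - a₂) := by
    show (2*b₁*b₂ - a₃) * ((-x₁ - x₂ - (2 * b₀ * b₂ + b₁ ^ 2 - a₂) / (2 * b₁ * b₂ - a₃)) + x₁ + x₂)
        = -(2*b₀*b₂ + b₁^2 - a₂)
    field_simp
    ring
  have main : (x₁ - x₂) * ((b₂*x₃^2 + b₁*x₃ + b₀)^2
      - (b₂^2*x₃^4 + a₃*x₃^3 + a₂*x₃^2 + a₁*x₃ + a₀)) = 0 := by
    linear_combination (x₃ - x₂) * hg1 - (x₃ - x₁) * hg2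
      + (x₁ - x₂) * (x₃ - x₁) * (x₃ - x₂) * hXt
  have hq := (mul_eq_zero.mp main).resolve_left hd
  linear_combination hq
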